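/- Let {a_n} be a bounded sequence of real numbers and let T_N = (1/N)·Σ_{n=1}^{N} a_n. Then T_N converges to a limit t as N → ∞ if and only if there exists a strictly increasing sequence of indices {N_i} such that N_i / N_{i+1} → 1 as i → ∞ and T_{N_i} → t as i → ∞. -/

import Mathlib

open Filter Topology Finset

private lemma cesaro_key (a : ℕ → ℝ) (C : ℝ) (hC : ∀ n, |a n| ≤ C)
    {m n M : ℕ} (hm : 1 ≤ m) (hmn : m ≤ n) (hnM : n ≤ M) :
    |(1 / (n:ℝ)) * ∑ k ∈ Finset.Icc 1 n, a k
      - (1 / (m:ℝ)) * ∑ k ∈ Finset.Icc 1 m, a k|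
      ≤ 2 * C * (1 - (m:ℝ)/(M:ℝ)) := by
  have hC0 : 0 ≤ C := (abs_nonneg _).trans (hC 0)
  have hmR : (0:ℝ) < m := by exact_mod_cast hm
  have hnR : (0:ℝ) < n := lt_of_lt_of_le hmR (by exact_mod_cast hmn)
  have hMR : (0:ℝ) < M := lt_of_lt_of_le hnR (by exact_mod_cast hnM)
  have hsplit : ∑ k ∈ Finset.Icc 1 n, a k
      = (∑ k ∈ Finset.Icc 1 m, a k) + ∑ k ∈ Finset.Ioc m n, a k := by
    rw [show Finset.Icc 1 n = Finset.Ioc 0 n by ext; simp only [Finset.mem_Icc, Finset.mem_Ioc]; omega,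
      show Finset.Icc 1 m = Finset.Ioc 0 m by ext; simp only [Finset.mem_Icc, Finset.mem_Ioc]; omega]
    exact (Finset.sum_Ioc_consecutive a (Nat.zero_le m) hmn).symm
  have hSm : |∑ k ∈ Finset.Icc 1 m, a k| ≤ C * m := by
    calc |∑ k ∈ Finset.Icc 1 m, a k| ≤ ∑ k ∈ Finset.Icc 1 m, |a k| :=
          Finset.abs_sum_le_sum_abs _ _
      _ ≤ ∑ _k ∈ Finset.Icc 1 m, C := Finset.sum_le_sum fun k _ => hC k
      _ = C * m := by rw [Finset.sum_const, Nat.card_Icc]; simp; ring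
  have hD : |∑ k ∈ Finset.Ioc m n, a k| ≤ C * ((n:ℝ) - m) := by
    calc |∑ k ∈ Finset.Ioc m n, a k| ≤ ∑ k ∈ Finset.Ioc m n, |a k| :=
          Finset.abs_sum_le_sum_abs _ _
      _ ≤ ∑ _k ∈ Finset.Ioc m n, C := Finset.sum_le_sum fun k _ => hC k
      _ = C * ((n:ℝ) - m) := by
          rw [Finset.sum_const, Nat.card_Ioc, nsmul_eq_mul,
            Nat.cast_sub hmn]; ring
  set Sm := ∑ k ∈ Finset.Icc 1 m, a k with hSmdef
  set D := ∑ k ∈ Finset.Ioc m n, a k with hDdef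
  have heq : (1 / (n:ℝ)) * ∑ k ∈ Finset.Icc 1 n, a k
      - (1 / (m:ℝ)) * Sm = (1/(n:ℝ) - 1/(m:ℝ)) * Sm + (1/(n:ℝ)) * D := by
    rw [hsplit]; ring
  rw [heq]
  have h1 : |(1/(n:ℝ) - 1/(m:ℝ)) * Sm| ≤ C * (1 - (m:ℝ)/n) := by
    rw [abs_mul]
    have : |1/(n:ℝ) - 1/(m:ℝ)| = 1/(m:ℝ) - 1/(n:ℝ) := by
      rw [abs_sub_comm, abs_of_nonneg]
      have : 1/(n:ℝ) ≤ 1/(m:ℝ) := by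
        apply one_div_le_one_div_of_le hmR; exact_mod_cast hmn
      linarith
    rw [this]
    calc (1/(m:ℝ) - 1/(n:ℝ)) * |Sm| ≤ (1/(m:ℝ) - 1/(n:ℝ)) * (C * m) := by
          apply mul_le_mul_of_nonneg_left hSm
          have : 1/(n:ℝ) ≤ 1/(m:ℝ) := by
            apply one_div_le_one_div_of_le hmR; exact_mod_cast hmn
          linarith
      _ = C * (1 - (m:ℝ)/n) := by field_simp
  have h2 : |(1/(n:ℝ)) * D| ≤ C * (1 - (m:ℝ)/n) := by
    rw [abs_mul, abs_of_nonneg (by positivity : (0:ℝ) ≤ 1/(n:ℝ))]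
    calc (1/(n:ℝ)) * |D| ≤ (1/(n:ℝ)) * (C * ((n:ℝ) - m)) := by
          apply mul_le_mul_of_nonneg_left hD; positivity
      _ = C * (1 - (m:ℝ)/n) := by field_simp
  have hmono : (m:ℝ)/M ≤ (m:ℝ)/n := by
    apply div_le_div_of_nonneg_left (by positivity) hnR
    exact_mod_cast hnM
  calc |(1/(n:ℝ) - 1/(m:ℝ)) * Sm + (1/(n:ℝ)) * D|
      ≤ |(1/(n:ℝ) - 1/(m:ℝ)) * Sm| + |(1/(n:ℝ)) * D| := abs_add_le _ _
    _ ≤ C * (1 - (m:ℝ)/n) + C * (1 - (m:ℝ)/n) := add_le_add h1 h2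
    _ = 2 * C * (1 - (m:ℝ)/n) := by ring
    _ ≤ 2 * C * (1 - (m:ℝ)/M) := by nlinarith

/-- Cesàro averages of a bounded sequence converge to t iff they converge to t
along a strictly increasing sequence of indices N_i with N_i/N_{i+1} → 1. -/
theorem cesaro_limit_iff_sparse_subsequence (a : ℕ → ℝ) (C : ℝ)
    (hC : ∀ n, |a n| ≤ C) (t : ℝ) :
    Tendsto (fun N : ℕ => (1 / (N : ℝ)) * ∑ n ∈ Finset.Icc 1 N, a n)
        atTop (nhds t) ↔
      ∃ Nseq : ℕ → ℕ, StrictMono Nseq ∧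
        Tendsto (fun i : ℕ => (Nseq i : ℝ) / (Nseq (i + 1) : ℝ)) atTop (nhds 1) ∧
        Tendsto (fun i : ℕ =>
            (1 / (Nseq i : ℝ)) * ∑ n ∈ Finset.Icc 1 (Nseq i), a n)
          atTop (nhds t) := by
  constructor
  · intro h
    refine ⟨fun i => i + 1, fun i j hij => Nat.add_lt_add_right hij 1, ?_, ?_⟩
    · have h0 : Tendsto (fun i : ℕ => 1 - 1/((i:ℝ)+2)) atTop (nhds 1) := by
        have := ((tendsto_one_div_add_atTop_nhds_zero_nat : Tendsto (fun n : ℕ => 1 / ((n : ℝ) + 1)) atTop (𝓝 0)).comp (tendsto_add_atTop_nat 1))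
        have h2 : Tendsto (fun i : ℕ => 1/((i:ℝ)+2)) atTop (nhds 0) := by
          convert this using 2 with i
          simp [Function.comp]; ring
        simpa using (tendsto_const_nhds (x := (1:ℝ))).sub h2
      convert h0 using 2 with i
      have hi : ((i:ℝ)+2) ≠ 0 := by positivity
      push_cast
      field_simp
      ring
    · exact h.comp (tendsto_add_atTop_nat 1)
  · rintro ⟨N, hmono, hratio, hT⟩
    have hC0 : 0 ≤ C := (abs_nonneg _).trans (hC 0)
    have hle : ∀ i, i ≤ N i := fun i => hmono.le_apply
    rw [Metric.tendsto_atTop] at hT ⊢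
    rw [Metric.tendsto_atTop] at hratio
    intro ε hε
    have hδ : 0 < ε / (2 * (2 * C + 1)) := by positivity
    obtain ⟨i1, hi1⟩ := hratio _ hδ
    obtain ⟨i2, hi2⟩ := hT _ (half_pos hε)
    set i0 := max i1 i2 + 1 with hi0def
    refine ⟨N i0, fun n hn => ?_⟩
    set i := Nat.findGreatest (fun j => N j ≤ n) n with hidef
    have hi0n : i0 ≤ n := le_trans (hle i0) hn
    have hP : N i ≤ n := Nat.findGreatest_spec (P := fun j => N j ≤ n) hi0n hn
    have hii0 : i0 ≤ i := Nat.le_findGreatest hi0n hn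
    have hmaxi : max i1 i2 ≤ i := le_trans (by omega) hii0
    have hnlt : n < N (i + 1) := by
      by_cases hc : i + 1 ≤ n
      · by_contra hcon
        exact Nat.findGreatest_is_greatest (Nat.lt_succ_self i) hc (not_lt.mp hcon)
      · have : n < i + 1 := not_le.mp hc
        exact lt_of_lt_of_le this (hle (i+1))
    have hm1 : 1 ≤ N i := le_trans (le_trans (by omega : 1 ≤ i0) hii0) (hle i)
    have hkey := cesaro_key a C hC hm1 hP (le_of_lt hnlt)
    -- ratio bound
    have hiN : 0 < N (i+1) := lt_of_lt_of_le (by omega) (hle (i+1))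
    have hratio_le : (N i : ℝ) / (N (i+1) : ℝ) ≤ 1 := by
      rw [div_le_one (by exact_mod_cast hiN)]
      exact_mod_cast le_of_lt (hmono (Nat.lt_succ_self i))
    have hrb : |(N i : ℝ) / (N (i+1) : ℝ) - 1| < ε / (2 * (2 * C + 1)) :=
      hi1 i (le_trans (le_max_left _ _) hmaxi)
    have hrb' : 1 - (N i : ℝ) / (N (i+1) : ℝ) < ε / (2 * (2 * C + 1)) := by
      rw [abs_sub_comm, abs_of_nonneg (by linarith)] at hrb
      linarith
    have hhalf1 : 2 * C * (1 - (N i : ℝ) / (N (i+1) : ℝ)) < ε / 2 := by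
      have h1 : 2 * C * (1 - (N i : ℝ) / (N (i+1) : ℝ))
          ≤ (2 * C + 1) * (1 - (N i : ℝ) / (N (i+1) : ℝ)) := by nlinarith
      have h2 : (2 * C + 1) * (1 - (N i : ℝ) / (N (i+1) : ℝ))
          < (2 * C + 1) * (ε / (2 * (2 * C + 1))) := by
        apply mul_lt_mul_of_pos_left hrb' (by linarith)
      have h3 : (2 * C + 1) * (ε / (2 * (2 * C + 1))) = ε / 2 := by
        field_simp
      linarith
    have hTi : dist ((1 / (N i : ℝ)) * ∑ n ∈ Finset.Icc 1 (N i), a n) t < ε / 2 :=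
      hi2 i (le_trans (le_max_right _ _) hmaxi)
    rw [Real.dist_eq] at hTi ⊢
    calc |(1 / (n:ℝ)) * ∑ k ∈ Finset.Icc 1 n, a k - t|
        ≤ |(1 / (n:ℝ)) * ∑ k ∈ Finset.Icc 1 n, a k
            - (1 / (N i : ℝ)) * ∑ k ∈ Finset.Icc 1 (N i), a k|
          + |(1 / (N i : ℝ)) * ∑ k ∈ Finset.Icc 1 (N i), a k - t| :=
          abs_sub_le _ _ _
      _ < 2 * C * (1 - (N i : ℝ) / (N (i+1) : ℝ)) + ε / 2 := by
          apply add_lt_add_of_le_of_lt hkey hTi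
      _ < ε / 2 + ε / 2 := by linarith
      _ = ε := by ring
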